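/- Let {K_i} be a ℘_ω-semistable configuration of subspaces of V⊗W and suppose H ⊊ V is a nonzero proper subspace with ℘_ω(H) = ℘_ω({K_i}) that is maximal with this property, i.e. there is no proper subspace H' ⊊ V with H ⊊ H' and ℘_ω(H') = ℘_ω({K_i}). Then the quotient configuration of {K_i} on V/H is ℘_ω-stable and its normalized total weighted dimension (1/dim(V/H))·Σ_i ω_i·dim Q_i equals ℘_ω({K_i}), where Q_i is the image of K_i under the induced map V⊗W → (V/H)⊗W. -/

import Mathlib

open scoped TensorProduct
open Module

noncomputable section

variable {V : Type*} [AddCommGroup V] [Module ℂ V]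

/-- The image of `H ⊗ W` in `V ⊗ W` under the canonical inclusion, for `H ⊆ V`. -/
def tensorSub (W : Type*) [AddCommGroup W] [Module ℂ W] (H : Submodule ℂ V) :
    Submodule ℂ (V ⊗[ℂ] W) :=
  LinearMap.range (TensorProduct.map H.subtype (LinearMap.id : W →ₗ[ℂ] W))

variable {W : Type*} [AddCommGroup W] [Module ℂ W]

/-- `℘_ω(H) = (1/dim H)·Σ_i ω_i·dim(K_i ∩ (H⊗W))`. -/
def slopeConfig {m : ℕ} (ω : Fin m → ℕ) (K : Fin m → Submodule ℂ (V ⊗[ℂ] W))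
    (H : Submodule ℂ V) : ℚ :=
  (∑ i, (ω i : ℚ) * (finrank ℂ ↥(K i ⊓ tensorSub W H) : ℚ)) / (finrank ℂ ↥H : ℚ)

/-- `℘_ω({K_i}) = (1/dim V)·Σ_i ω_i·dim K_i`. -/
def totalConfig {m : ℕ} (ω : Fin m → ℕ) (K : Fin m → Submodule ℂ (V ⊗[ℂ] W)) : ℚ :=
  (∑ i, (ω i : ℚ) * (finrank ℂ ↥(K i) : ℚ)) / (finrank ℂ V : ℚ)

/- ### Auxiliary lemmas -/

/-- Rank–nullity for the image of a submodule under a linear map. -/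
lemma aux_finrank_map {M N : Type*} [AddCommGroup M] [Module ℂ M] [AddCommGroup N]
    [Module ℂ N] [FiniteDimensional ℂ M] (f : M →ₗ[ℂ] N) (p : Submodule ℂ M) :
    finrank ℂ ↥(p.map f) + finrank ℂ ↥(p ⊓ LinearMap.ker f) = finrank ℂ ↥p := by
  have h1 := LinearMap.finrank_range_add_finrank_ker (f.domRestrict p)
  rw [LinearMap.range_domRestrict, LinearMap.ker_domRestrict] at h1
  have h2 : Submodule.comap p.subtype (LinearMap.ker f)
      = Submodule.comap p.subtype (p ⊓ LinearMap.ker f) := by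
    ext x; simp [x.2]
  rw [h2, (Submodule.comapSubtypeEquivOfLe
    (inf_le_left : p ⊓ LinearMap.ker f ≤ p)).finrank_eq] at h1
  exact h1

/-- The kernel of `f ⊗ id_W` is `(ker f) ⊗ W` for surjective `f`. -/
lemma aux_ker_rTensor {M N : Type*} [AddCommGroup M] [Module ℂ M] [AddCommGroup N]
    [Module ℂ N] (f : M →ₗ[ℂ] N) (hf : Function.Surjective f) :
    LinearMap.ker (LinearMap.rTensor W f) = tensorSub W (LinearMap.ker f) := by
  have hex : Function.Exact (LinearMap.ker f).subtype f := LinearMap.exact_subtype_ker_map f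
  have h := rTensor_exact (R := ℂ) W hex hf
  rw [LinearMap.exact_iff] at h
  rw [h]
  rfl

lemma aux_map_inf {M N : Type*} [AddCommGroup M] [Module ℂ M] [AddCommGroup N]
    [Module ℂ N] (f : M →ₗ[ℂ] N) (p : Submodule ℂ M) (T : Submodule ℂ N) :
    Submodule.map f p ⊓ T = Submodule.map f (p ⊓ Submodule.comap f T) := by
  ext x
  simp only [Submodule.mem_inf, Submodule.mem_map, Submodule.mem_comap]
  constructor
  · rintro ⟨⟨y, hy, rfl⟩, hT⟩; exact ⟨y, ⟨hy, hT⟩, rfl⟩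
  · rintro ⟨y, ⟨hy, hT⟩, rfl⟩; exact ⟨⟨y, hy, rfl⟩, hT⟩

/-- Pre-image of `S ⊗ W` under the projection is `(π⁻¹ S) ⊗ W`. -/
lemma aux_comap (H : Submodule ℂ V) (S : Submodule ℂ (V ⧸ H)) :
    Submodule.comap (LinearMap.rTensor W H.mkQ) (tensorSub W S)
      = tensorSub W (Submodule.comap H.mkQ S) := by
  have h1 : tensorSub W S = LinearMap.ker (LinearMap.rTensor W S.mkQ) := by
    rw [aux_ker_rTensor S.mkQ (Submodule.mkQ_surjective S), Submodule.ker_mkQ]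
  have hsurj : Function.Surjective (S.mkQ ∘ₗ H.mkQ) := by
    rw [LinearMap.coe_comp]
    exact (Submodule.mkQ_surjective S).comp (Submodule.mkQ_surjective H)
  rw [h1, ← LinearMap.ker_comp, ← LinearMap.rTensor_comp, aux_ker_rTensor _ hsurj,
    LinearMap.ker_comp, Submodule.ker_mkQ]

theorem stmt_11 (V W : Type*) [AddCommGroup V] [Module ℂ V] [FiniteDimensional ℂ V] [Nontrivial V]
    [AddCommGroup W] [Module ℂ W] [FiniteDimensional ℂ W] [Nontrivial W]
    (m : ℕ) (hm : 1 ≤ m) (ω : Fin m → ℕ) (hω : ∀ i, 0 < ω i)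
    (K : Fin m → Submodule ℂ (V ⊗[ℂ] W))
    (hss : ∀ H : Submodule ℂ V, H ≠ ⊥ → H ≠ ⊤ → slopeConfig ω K H ≤ totalConfig ω K)
    (H : Submodule ℂ V) (hH0 : H ≠ ⊥) (hHt : H ≠ ⊤)
    (hHeq : slopeConfig ω K H = totalConfig ω K)
    (hmax : ¬ ∃ H' : Submodule ℂ V, H < H' ∧ H' ≠ ⊤ ∧ slopeConfig ω K H' = totalConfig ω K)
    (Q : Fin m → Submodule ℂ ((V ⧸ H) ⊗[ℂ] W))
    (hQ : ∀ i, Q i = Submodule.map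
      (TensorProduct.map H.mkQ (LinearMap.id : W →ₗ[ℂ] W)) (K i)) :
    (∀ S : Submodule ℂ (V ⧸ H), S ≠ ⊥ → S ≠ ⊤ →
      (∑ i, (ω i : ℚ) * (finrank ℂ ↥(Q i ⊓ tensorSub W S) : ℚ)) / (finrank ℂ ↥S : ℚ) <
        (∑ i, (ω i : ℚ) * (finrank ℂ ↥(Q i) : ℚ)) / (finrank ℂ (V ⧸ H) : ℚ)) ∧
    (∑ i, (ω i : ℚ) * (finrank ℂ ↥(Q i) : ℚ)) / (finrank ℂ (V ⧸ H) : ℚ) =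
      totalConfig ω K := by
  classical
  set π : V ⊗[ℂ] W →ₗ[ℂ] (V ⧸ H) ⊗[ℂ] W := LinearMap.rTensor W H.mkQ with hπ
  have hQπ : ∀ i, Q i = Submodule.map π (K i) := hQ
  have hkerπ : LinearMap.ker π = tensorSub W H := by
    rw [hπ, aux_ker_rTensor H.mkQ (Submodule.mkQ_surjective H), Submodule.ker_mkQ]
  set t := totalConfig ω K with ht
  -- dimension positivity facts
  have hn : (0 : ℚ) < (finrank ℂ V : ℚ) := by exact_mod_cast Module.finrank_pos
  have hh : (0 : ℚ) < (finrank ℂ ↥H : ℚ) := by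
    have : H ≠ ⊥ := hH0
    have := Submodule.finrank_eq_zero (R := ℂ) (S := H)
    have hpos : 0 < finrank ℂ ↥H :=
      Nat.pos_of_ne_zero (fun h0 => hH0 (this.mp h0))
    exact_mod_cast hpos
  have hq_add : (finrank ℂ (V ⧸ H) : ℚ) + (finrank ℂ ↥H : ℚ) = (finrank ℂ V : ℚ) := by
    exact_mod_cast Submodule.finrank_quotient_add_finrank H
  have hhlt : (finrank ℂ ↥H : ℚ) < (finrank ℂ V : ℚ) := by
    exact_mod_cast Submodule.finrank_lt hHt
  have hq : (0 : ℚ) < (finrank ℂ (V ⧸ H) : ℚ) := by linarith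
  -- total weighted dimensions
  have hc : ∑ i, (ω i : ℚ) * (finrank ℂ ↥(K i) : ℚ) = t * (finrank ℂ V : ℚ) := by
    rw [ht, totalConfig, div_mul_cancel₀ _ hn.ne']
  have ha : ∑ i, (ω i : ℚ) * (finrank ℂ ↥(K i ⊓ tensorSub W H) : ℚ)
      = t * (finrank ℂ ↥H : ℚ) := by
    have := hHeq
    rw [slopeConfig, div_eq_iff hh.ne'] at this
    rw [this, ht]
  -- dimension of the quotient configuration
  have hdimQ : ∀ i, (finrank ℂ ↥(Q i) : ℚ)
      = (finrank ℂ ↥(K i) : ℚ) - (finrank ℂ ↥(K i ⊓ tensorSub W H) : ℚ) := by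
    intro i
    have h1 := aux_finrank_map π (K i)
    rw [hkerπ, ← hQπ i] at h1
    have h2 : (finrank ℂ ↥(Q i) : ℚ) + (finrank ℂ ↥(K i ⊓ tensorSub W H) : ℚ)
        = (finrank ℂ ↥(K i) : ℚ) := by exact_mod_cast h1
    linarith
  have hQsum : ∑ i, (ω i : ℚ) * (finrank ℂ ↥(Q i) : ℚ)
      = t * (finrank ℂ (V ⧸ H) : ℚ) := by
    simp_rw [hdimQ, mul_sub]
    rw [Finset.sum_sub_distrib, hc, ha, ← hq_add]
    ring
  have htot : (∑ i, (ω i : ℚ) * (finrank ℂ ↥(Q i) : ℚ)) / (finrank ℂ (V ⧸ H) : ℚ) = t := by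
    rw [hQsum, mul_div_assoc, div_self hq.ne', mul_one]
  refine ⟨?_, htot⟩
  intro S hS0 hSt
  set H' : Submodule ℂ V := Submodule.comap H.mkQ S with hH'
  have hHle : H ≤ H' := by
    intro x hx
    simp only [hH', Submodule.mem_comap, Submodule.mkQ_apply]
    rw [Submodule.Quotient.mk_eq_zero H |>.mpr hx]
    exact S.zero_mem
  have hmapS : Submodule.map H.mkQ H' = S :=
    Submodule.map_comap_eq_self (by rw [Submodule.range_mkQ]; exact le_top)
  have hHlt : H < H' := by
    refine lt_of_le_of_ne hHle (fun he => hS0 ?_)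
    rw [← hmapS, ← he]
    refine (Submodule.eq_bot_iff _).mpr ?_
    rintro x ⟨y, hy, rfl⟩
    exact (Submodule.Quotient.mk_eq_zero H).mpr hy
  have hH'bot : H' ≠ ⊥ := by
    intro hb
    exact hH0 (le_bot_iff.mp (hb ▸ hHle))
  have hH'top : H' ≠ ⊤ := by
    intro htop
    apply hSt
    rw [← hmapS, htop, Submodule.map_top, Submodule.range_mkQ]
  -- strict inequality for H'
  have hb_lt : slopeConfig ω K H' < t := by
    refine lt_of_le_of_ne (hss H' hH'bot hH'top) (fun heq => hmax ⟨H', hHlt, hH'top, heq⟩)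
  have hh' : (0 : ℚ) < (finrank ℂ ↥H' : ℚ) := by
    have hpos : 0 < finrank ℂ ↥H' :=
      Nat.pos_of_ne_zero (fun h0 => hH'bot ((Submodule.finrank_eq_zero (R := ℂ)).mp h0))
    exact_mod_cast hpos
  have hbsum : ∑ i, (ω i : ℚ) * (finrank ℂ ↥(K i ⊓ tensorSub W H') : ℚ)
      < t * (finrank ℂ ↥H' : ℚ) := by
    have := hb_lt
    rw [slopeConfig, div_lt_iff₀ hh'] at this
    exact this
  -- dim S = dim H' - dim H
  have hs_add : (finrank ℂ ↥S : ℚ) + (finrank ℂ ↥H : ℚ) = (finrank ℂ ↥H' : ℚ) := by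
    have h1 := aux_finrank_map H.mkQ H'
    rw [Submodule.ker_mkQ, inf_eq_right.mpr hHle, hmapS] at h1
    exact_mod_cast h1
  have hs : (0 : ℚ) < (finrank ℂ ↥S : ℚ) := by
    have hpos : 0 < finrank ℂ ↥S :=
      Nat.pos_of_ne_zero (fun h0 => hS0 ((Submodule.finrank_eq_zero (R := ℂ)).mp h0))
    exact_mod_cast hpos
  -- tensorSub is monotone in the needed case
  have htsub : tensorSub W H ≤ tensorSub W H' := by
    rw [← hkerπ, hH', ← aux_comap H S]
    intro x hx
    rw [LinearMap.mem_ker] at hx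
    simp only [Submodule.mem_comap, hx]
    have hx' : (LinearMap.rTensor W H.mkQ) x = 0 := hx
    rw [hx']
    exact (tensorSub W S).zero_mem
  -- key dimension computation for intersections in the quotient
  have hkey : ∀ i, (finrank ℂ ↥(Q i ⊓ tensorSub W S) : ℚ)
      = (finrank ℂ ↥(K i ⊓ tensorSub W H') : ℚ)
        - (finrank ℂ ↥(K i ⊓ tensorSub W H) : ℚ) := by
    intro i
    have h1 : Q i ⊓ tensorSub W S = Submodule.map π (K i ⊓ tensorSub W H') := by
      rw [hQπ i, aux_map_inf, hπ, aux_comap H S, ← hH']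
    have h2 := aux_finrank_map π (K i ⊓ tensorSub W H')
    rw [hkerπ, ← h1] at h2
    have h3 : K i ⊓ tensorSub W H' ⊓ tensorSub W H = K i ⊓ tensorSub W H := by
      rw [inf_assoc, inf_eq_right.mpr htsub]
    rw [h3] at h2
    have h4 : (finrank ℂ ↥(Q i ⊓ tensorSub W S) : ℚ)
        + (finrank ℂ ↥(K i ⊓ tensorSub W H) : ℚ)
        = (finrank ℂ ↥(K i ⊓ tensorSub W H') : ℚ) := by exact_mod_cast h2
    linarith
  rw [htot, div_lt_iff₀ hs]
  have hsum : ∑ i, (ω i : ℚ) * (finrank ℂ ↥(Q i ⊓ tensorSub W S) : ℚ)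
      = (∑ i, (ω i : ℚ) * (finrank ℂ ↥(K i ⊓ tensorSub W H') : ℚ))
        - (∑ i, (ω i : ℚ) * (finrank ℂ ↥(K i ⊓ tensorSub W H) : ℚ)) := by
    simp_rw [hkey, mul_sub]
    rw [Finset.sum_sub_distrib]
  have hts : t * (finrank ℂ ↥S : ℚ) = t * (finrank ℂ ↥H' : ℚ) - t * (finrank ℂ ↥H : ℚ) := by
    rw [← hs_add]; ring
  rw [hsum, ha, hts]
  linarith
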